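/- Inverse theorem for the U² norm: there is a constant c > 0 such that for every δ > 0 and every f : [N] → [-1,1] with ‖f‖_{U²([N])} ≥ δ, there exists θ ∈ ℝ/ℤ such that |E_{n ∈ [N]} f(n) e(-θn)| ≥ c·δ². -/

import Mathlib

open Finset Complex

/-- The fourth power of the Gowers `U²(ℤ/Mℤ)` norm. -/
noncomputable def U2p4 (M : ℕ) [NeZero M] (f : ZMod M → ℂ) : ℂ :=
  (1 / (M : ℂ) ^ 3) * ∑ a : ZMod M, ∑ h₁ : ZMod M, ∑ h₂ : ZMod M,
    f a * (starRingEnd ℂ) (f (a + h₁)) * (starRingEnd ℂ) (f (a + h₂)) * f (a + h₁ + h₂)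

/-- The `U²(ℤ/Mℤ)` norm. -/
noncomputable def u2norm (M : ℕ) [NeZero M] (f : ZMod M → ℂ) : ℝ :=
  (U2p4 M f).re ^ ((1 : ℝ) / 4)

/-- Extend a function on `[N] = {1,…,N}` by zero to `ℤ/Mℤ`. -/
def extendZ (N M : ℕ) (f : ℕ → ℂ) : ZMod M → ℂ :=
  fun x => if 1 ≤ x.val ∧ x.val ≤ N then f x.val else 0

/-- The `U²([N])` norm: embed `[N]` into `ℤ/Mℤ` with `M = 2N+2 ≥ 2N`, extend by zero,
and normalize by `‖1_{[N]}‖_{U²(ℤ/Mℤ)}`. -/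
noncomputable def U2N (N : ℕ) (f : ℕ → ℂ) : ℝ :=
  u2norm (2 * N + 1 + 1) (extendZ N (2 * N + 1 + 1) f) /
    u2norm (2 * N + 1 + 1) (extendZ N (2 * N + 1 + 1) (fun _ => 1))

namespace U2Aux

variable {M : ℕ} [NeZero M]

noncomputable def χ (M : ℕ) [NeZero M] : AddChar (ZMod M) ℂ := ZMod.stdAddChar

lemma chi_orth (t : ZMod M) : ∑ k : ZMod M, χ M (t * k) = if t = 0 then (M : ℂ) else 0 := by
  split_ifs with h
  · simp [h, χ, AddChar.map_zero_eq_one]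
  · exact AddChar.sum_eq_zero_of_ne_one (ZMod.isPrimitive_stdAddChar M h)

lemma chi_conj (x : ZMod M) : (starRingEnd ℂ) (χ M x) = χ M (-x) := by
  rw [AddChar.map_neg_eq_inv, ← Complex.inv_eq_conj]
  rw [χ, ZMod.stdAddChar_apply]
  exact Circle.norm_coe _

noncomputable def Sfun (M : ℕ) [NeZero M] (g : ZMod M → ℂ) (k : ZMod M) : ℂ :=
  ∑ a : ZMod M, g a * χ M (a * k)

lemma conj_Sfun (g : ZMod M → ℂ) (k : ZMod M) :
    (starRingEnd ℂ) (Sfun M g k) = ∑ b : ZMod M, (starRingEnd ℂ) (g b) * χ M (-(b * k)) := by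
  rw [Sfun, map_sum]
  exact Finset.sum_congr rfl fun b _ => by rw [map_mul, chi_conj]

lemma mul_conj_Sfun (g : ZMod M → ℂ) (k : ZMod M) :
    Sfun M g k * (starRingEnd ℂ) (Sfun M g k) =
      ∑ a : ZMod M, ∑ b : ZMod M, (g a * (starRingEnd ℂ) (g b)) * χ M ((a - b) * k) := by
  rw [conj_Sfun, Sfun, Finset.sum_mul_sum]
  refine Finset.sum_congr rfl fun a _ => Finset.sum_congr rfl fun b _ => ?_
  have h : (a - b) * k = a * k + -(b * k) := by ring
  rw [h, AddChar.map_add_eq_mul]; ring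

lemma parseval (g : ZMod M → ℂ) :
    ∑ k : ZMod M, (normSq (Sfun M g k) : ℂ) = (M : ℂ) * ∑ a : ZMod M, (normSq (g a) : ℂ) := by
  have h : ∀ k, (normSq (Sfun M g k) : ℂ) = Sfun M g k * (starRingEnd ℂ) (Sfun M g k) :=
    fun k => (Complex.mul_conj _).symm
  calc ∑ k : ZMod M, (normSq (Sfun M g k) : ℂ)
      = ∑ k : ZMod M, ∑ a : ZMod M, ∑ b : ZMod M,
          (g a * (starRingEnd ℂ) (g b)) * χ M ((a - b) * k) := by
        refine Finset.sum_congr rfl fun k _ => ?_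
        rw [h k, mul_conj_Sfun]
    _ = ∑ a : ZMod M, ∑ b : ZMod M, (g a * (starRingEnd ℂ) (g b)) * ∑ k : ZMod M, χ M ((a - b) * k) := by
        rw [Finset.sum_comm]
        refine Finset.sum_congr rfl fun a _ => ?_
        rw [Finset.sum_comm]
        exact Finset.sum_congr rfl fun b _ => (Finset.mul_sum _ _ _).symm
    _ = ∑ a : ZMod M, ∑ b : ZMod M, (if b = a then (g a * (starRingEnd ℂ) (g b)) * M else 0) := by
        refine Finset.sum_congr rfl fun a _ => Finset.sum_congr rfl fun b _ => ?_
        rw [chi_orth]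
        have : a - b = 0 ↔ b = a := by constructor <;> intro h' <;> [skip; rw [h']] <;>
          [exact (sub_eq_zero.mp h').symm; exact sub_self a]
        by_cases hb : b = a
        · simp [hb]
        · simp [hb, this]
    _ = ∑ a : ZMod M, (g a * (starRingEnd ℂ) (g a)) * M := by
        refine Finset.sum_congr rfl fun a _ => ?_
        exact Finset.sum_ite_eq' univ a _ |>.trans (by simp)
    _ = (M : ℂ) * ∑ a : ZMod M, (normSq (g a) : ℂ) := by
        rw [Finset.mul_sum]
        refine Finset.sum_congr rfl fun a _ => ?_
        rw [Complex.mul_conj]; ring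

lemma quartic (g : ZMod M → ℂ) :
    ∑ k : ZMod M, (normSq (Sfun M g k) : ℂ) ^ 2 =
      (M : ℂ) * ∑ a : ZMod M, ∑ b : ZMod M, ∑ c : ZMod M,
        g a * (starRingEnd ℂ) (g b) * (starRingEnd ℂ) (g c) * g (b + c - a) := by
  have key : ∀ k : ZMod M, (normSq (Sfun M g k) : ℂ) ^ 2 =
      ∑ a : ZMod M, ∑ c : ZMod M, ∑ b : ZMod M, ∑ d : ZMod M,
        (g a * (starRingEnd ℂ) (g b) * (g c * (starRingEnd ℂ) (g d)))
          * χ M ((a - b + c - d) * k) := by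
    intro k
    have h0 : (normSq (Sfun M g k) : ℂ) ^ 2
        = (Sfun M g k * (starRingEnd ℂ) (Sfun M g k)) * (Sfun M g k * (starRingEnd ℂ) (Sfun M g k)) := by
      rw [Complex.mul_conj]; ring
    rw [h0, mul_conj_Sfun, Finset.sum_mul_sum]
    refine Finset.sum_congr rfl fun a _ => Finset.sum_congr rfl fun c _ => ?_
    rw [Finset.sum_mul_sum]
    refine Finset.sum_congr rfl fun b _ => Finset.sum_congr rfl fun d _ => ?_
    have h : (a - b + c - d) * k = (a - b) * k + (c - d) * k := by ring
    rw [h, AddChar.map_add_eq_mul]; ring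
  calc ∑ k : ZMod M, (normSq (Sfun M g k) : ℂ) ^ 2
      = ∑ a : ZMod M, ∑ c : ZMod M, ∑ b : ZMod M, ∑ d : ZMod M,
          (g a * (starRingEnd ℂ) (g b) * (g c * (starRingEnd ℂ) (g d)))
            * ∑ k : ZMod M, χ M ((a - b + c - d) * k) := by
        rw [Finset.sum_congr rfl fun k _ => key k, Finset.sum_comm]
        refine Finset.sum_congr rfl fun a _ => ?_
        rw [Finset.sum_comm]
        refine Finset.sum_congr rfl fun c _ => ?_
        rw [Finset.sum_comm]
        refine Finset.sum_congr rfl fun b _ => ?_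
        rw [Finset.sum_comm]
        exact Finset.sum_congr rfl fun d _ => (Finset.mul_sum _ _ _).symm
    _ = ∑ a : ZMod M, ∑ c : ZMod M, ∑ b : ZMod M,
          g a * (starRingEnd ℂ) (g b) * (g c * (starRingEnd ℂ) (g (a - b + c))) * M := by
        refine Finset.sum_congr rfl fun a _ => Finset.sum_congr rfl fun c _ =>
          Finset.sum_congr rfl fun b _ => ?_
        have : ∀ d : ZMod M, (g a * (starRingEnd ℂ) (g b) * (g c * (starRingEnd ℂ) (g d)))
            * ∑ k : ZMod M, χ M ((a - b + c - d) * k)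
            = if d = a - b + c then
                g a * (starRingEnd ℂ) (g b) * (g c * (starRingEnd ℂ) (g d)) * M else 0 := by
          intro d
          rw [chi_orth]
          by_cases hd : d = a - b + c
          · have : a - b + c - d = 0 := by rw [hd]; ring
            simp [hd, this]
          · have : ¬ (a - b + c - d = 0) := fun h' => hd (by linear_combination -h')
            simp [hd, this]
        rw [Finset.sum_congr rfl fun d _ => this d, Finset.sum_ite_eq' univ (a - b + c) _]
        simp
    _ = (M : ℂ) * ∑ a : ZMod M, ∑ b : ZMod M, ∑ c : ZMod M,
          g a * (starRingEnd ℂ) (g b) * (starRingEnd ℂ) (g c) * g (b + c - a) := by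
        rw [Finset.mul_sum]
        refine Finset.sum_congr rfl fun a _ => ?_
        rw [Finset.sum_comm, Finset.mul_sum]
        refine Finset.sum_congr rfl fun b _ => ?_
        rw [Finset.mul_sum]
        refine Fintype.sum_equiv (Equiv.addRight (a - b)) _ _ fun c => ?_
        simp only [Equiv.coe_addRight]
        have e1 : b + (c + (a - b)) - a = c := by ring
        rw [e1]
        have e2 : a - b + c = c + (a - b) := by ring
        rw [e2]
        ring

lemma reindexU2 (g : ZMod M → ℂ) :
    (M : ℂ) ^ 3 * U2p4 M g = ∑ a : ZMod M, ∑ b : ZMod M, ∑ c : ZMod M,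
      g a * (starRingEnd ℂ) (g b) * (starRingEnd ℂ) (g c) * g (b + c - a) := by
  have hM : ((M : ℂ)) ^ 3 ≠ 0 := pow_ne_zero _ (Nat.cast_ne_zero.mpr (NeZero.ne M))
  rw [U2p4, ← mul_assoc, mul_one_div, div_self hM, one_mul]
  refine Finset.sum_congr rfl fun a _ => ?_
  refine Fintype.sum_equiv (Equiv.addLeft a) _ _ fun h₁ => ?_
  simp only [Equiv.coe_addLeft]
  refine Fintype.sum_equiv (Equiv.addLeft a) _ _ fun h₂ => ?_
  simp only [Equiv.coe_addLeft]
  have e1 : a + h₁ + h₂ = (a + h₁) + (a + h₂) - a := by ring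
  rw [e1]

lemma U2p4_eq (g : ZMod M → ℂ) :
    U2p4 M g = (((∑ k : ZMod M, (normSq (Sfun M g k)) ^ 2) / (M : ℝ) ^ 4 : ℝ) : ℂ) := by
  have hM : ((M : ℂ)) ≠ 0 := Nat.cast_ne_zero.mpr (NeZero.ne M)
  have h1 := reindexU2 g
  have h2 := quartic g
  have h0 : (M : ℂ) ^ 4 * U2p4 M g = ∑ k : ZMod M, (normSq (Sfun M g k) : ℂ) ^ 2 := by
    rw [h2, ← h1]; ring
  have h3 : U2p4 M g = (∑ k : ZMod M, (normSq (Sfun M g k) : ℂ) ^ 2) / (M : ℂ) ^ 4 := by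
    field_simp at h0 ⊢
    linear_combination h0
  rw [h3]
  push_cast
  ring

lemma U2p4_re (g : ZMod M → ℂ) :
    (U2p4 M g).re = (∑ k : ZMod M, (normSq (Sfun M g k)) ^ 2) / (M : ℝ) ^ 4 := by
  rw [U2p4_eq, Complex.ofReal_re]

lemma U2p4_re_nonneg (g : ZMod M → ℂ) : 0 ≤ (U2p4 M g).re := by
  rw [U2p4_re]
  apply div_nonneg
  · exact Finset.sum_nonneg fun k _ => sq_nonneg _
  · positivity

def ind (N M : ℕ) [NeZero M] (x : ZMod M) : ℝ := if 1 ≤ x.val ∧ x.val ≤ N then 1 else 0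

lemma ind_nonneg (N : ℕ) (x : ZMod M) : 0 ≤ ind N M x := by
  unfold ind; split_ifs <;> norm_num

lemma ind_cast_one {N : ℕ} (hNM : N < M) {n : ℕ} (h1 : 1 ≤ n) (h2 : n ≤ N) :
    ind N M ((n : ZMod M)) = 1 := by
  unfold ind
  rw [ZMod.val_natCast_of_lt (lt_of_le_of_lt h2 hNM)]
  simp [h1, h2]

noncomputable def Tsum (N M : ℕ) [NeZero M] : ℝ :=
  ∑ a : ZMod M, ∑ h₁ : ZMod M, ∑ h₂ : ZMod M,
    ind N M a * ind N M (a + h₁) * ind N M (a + h₂) * ind N M (a + h₁ + h₂)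

lemma extend_one (N : ℕ) (x : ZMod M) :
    extendZ N M (fun _ => 1) x = ((ind N M x : ℝ) : ℂ) := by
  unfold extendZ ind; split_ifs <;> simp

lemma U2p4_one (N : ℕ) :
    U2p4 M (extendZ N M fun _ => 1) = ((Tsum N M / (M : ℝ) ^ 3 : ℝ) : ℂ) := by
  rw [U2p4, Tsum]
  simp only [extend_one, Complex.conj_ofReal, ← Complex.ofReal_mul, ← Complex.ofReal_sum]
  push_cast
  ring

lemma U2p4_one_re (N : ℕ) :
    (U2p4 M (extendZ N M fun _ => 1)).re = Tsum N M / (M : ℝ) ^ 3 := by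
  rw [U2p4_one, Complex.ofReal_re]

omit [NeZero M] in
lemma natCast_inj_of_lt {a b : ℕ} (ha : a < M) (hb : b < M)
    (h : (a : ZMod M) = (b : ZMod M)) : a = b := by
  rw [← ZMod.val_natCast_of_lt ha, ← ZMod.val_natCast_of_lt hb, h]

lemma Tsum_ge_card {N : ℕ} (hNM : 2 * N < M) (S : Finset (ℕ × ℕ × ℕ))
    (hS : ∀ p ∈ S, 1 ≤ p.1 ∧ p.1 ≤ N ∧ 1 ≤ p.2.1 ∧ p.2.1 ≤ N ∧ 1 ≤ p.2.2 ∧ p.2.2 ≤ N ∧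
        p.1 < p.2.1 + p.2.2 ∧ p.2.1 + p.2.2 ≤ N + p.1) :
    (S.card : ℝ) ≤ Tsum N M := by
  have hNM' : N < M := by omega
  have hT : Tsum N M = ∑ p : ZMod M × ZMod M × ZMod M,
      (ind N M p.1 * ind N M (p.1 + p.2.1) * ind N M (p.1 + p.2.2) *
        ind N M (p.1 + p.2.1 + p.2.2)) := by
    rw [Tsum, Fintype.sum_prod_type]
    exact Finset.sum_congr rfl fun a _ => by rw [Fintype.sum_prod_type]
  have hφval : ∀ q ∈ S,
      (ind N M ((q.1 : ZMod M)) * ind N M ((q.1 : ZMod M) + ((q.2.1 : ZMod M) - (q.1 : ZMod M))) *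
        ind N M ((q.1 : ZMod M) + ((q.2.2 : ZMod M) - (q.1 : ZMod M))) *
        ind N M ((q.1 : ZMod M) + ((q.2.1 : ZMod M) - (q.1 : ZMod M)) +
          ((q.2.2 : ZMod M) - (q.1 : ZMod M)))) = 1 := by
    intro q hq
    obtain ⟨h1, h2, h3, h4, h5, h6, h7, h8⟩ := hS q hq
    have c1 : (q.1 : ZMod M) + ((q.2.1 : ZMod M) - (q.1 : ZMod M)) = (q.2.1 : ZMod M) := by ring
    have c2 : (q.1 : ZMod M) + ((q.2.2 : ZMod M) - (q.1 : ZMod M)) = (q.2.2 : ZMod M) := by ring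
    have c3 : (q.1 : ZMod M) + ((q.2.1 : ZMod M) - (q.1 : ZMod M)) +
        ((q.2.2 : ZMod M) - (q.1 : ZMod M)) = ((q.2.1 + q.2.2 - q.1 : ℕ) : ZMod M) := by
      rw [Nat.cast_sub (by omega : q.1 ≤ q.2.1 + q.2.2)]
      push_cast
      ring
    rw [c3, c1, c2, ind_cast_one hNM' h1 h2, ind_cast_one hNM' h3 h4,
      ind_cast_one hNM' h5 h6, ind_cast_one hNM' (by omega) (by omega)]
    norm_num
  calc (S.card : ℝ) = ∑ _q ∈ S, (1 : ℝ) := by simp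
    _ = ∑ q ∈ S,
        (ind N M ((q.1 : ZMod M)) * ind N M ((q.1 : ZMod M) + ((q.2.1 : ZMod M) - (q.1 : ZMod M))) *
          ind N M ((q.1 : ZMod M) + ((q.2.2 : ZMod M) - (q.1 : ZMod M))) *
          ind N M ((q.1 : ZMod M) + ((q.2.1 : ZMod M) - (q.1 : ZMod M)) +
            ((q.2.2 : ZMod M) - (q.1 : ZMod M)))) :=
        Finset.sum_congr rfl fun q hq => (hφval q hq).symm
    _ = ∑ p ∈ S.image (fun q : ℕ × ℕ × ℕ => ((q.1 : ZMod M),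
          (q.2.1 : ZMod M) - (q.1 : ZMod M), (q.2.2 : ZMod M) - (q.1 : ZMod M))),
        (ind N M p.1 * ind N M (p.1 + p.2.1) * ind N M (p.1 + p.2.2) *
          ind N M (p.1 + p.2.1 + p.2.2)) := by
        rw [Finset.sum_image ?_]
        intro q hq q' hq' h
        obtain ⟨h1, h2, h3, h4, h5, h6, -, -⟩ := hS q hq
        obtain ⟨h1', h2', h3', h4', h5', h6', -, -⟩ := hS q' hq'
        simp only [Prod.mk.injEq] at h
        obtain ⟨e1, e2, e3⟩ := h
        have f1 : q.1 = q'.1 := natCast_inj_of_lt (by omega) (by omega) e1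
        have f2 : q.2.1 = q'.2.1 := by
          refine natCast_inj_of_lt (M := M) (a := q.2.1) (b := q'.2.1) (by omega) (by omega) ?_
          linear_combination e2 + e1
        have f3 : q.2.2 = q'.2.2 := by
          refine natCast_inj_of_lt (M := M) (a := q.2.2) (b := q'.2.2) (by omega) (by omega) ?_
          linear_combination e3 + e1
        exact Prod.ext f1 (Prod.ext f2 f3)
    _ ≤ ∑ p : ZMod M × ZMod M × ZMod M,
        (ind N M p.1 * ind N M (p.1 + p.2.1) * ind N M (p.1 + p.2.2) *
          ind N M (p.1 + p.2.1 + p.2.2)) := by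
        refine Finset.sum_le_sum_of_subset_of_nonneg (Finset.subset_univ _) fun p _ _ => ?_
        exact mul_nonneg (mul_nonneg (mul_nonneg (ind_nonneg _ _) (ind_nonneg _ _))
          (ind_nonneg _ _)) (ind_nonneg _ _)
    _ = Tsum N M := hT.symm

lemma Tsum_lower {N : ℕ} (hN : 0 < N) (hM : M = 2 * N + 2) :
    (N : ℝ) ^ 3 / 729 ≤ Tsum N M := by
  have hNM : 2 * N < M := by omega
  by_cases hbig : N ≤ 729
  · have key := Tsum_ge_card hNM
      ((Finset.Icc 1 N ×ˢ Finset.Icc 1 N).image fun q : ℕ × ℕ => (q.1, q.1, q.2)) ?_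
    · have hcard : ((Finset.Icc 1 N ×ˢ Finset.Icc 1 N).image
          fun q : ℕ × ℕ => (q.1, q.1, q.2)).card = N * N := by
        rw [Finset.card_image_of_injective _ (fun a b h => by
          simpa [Prod.ext_iff] using h), Finset.card_product, Nat.card_Icc]
        simp
      rw [hcard] at key
      refine le_trans ?_ key
      have hNr : (N : ℝ) ≤ 729 := by exact_mod_cast hbig
      have hNr0 : (0 : ℝ) < N := by exact_mod_cast hN
      push_cast
      rw [div_le_iff₀ (by norm_num : (0:ℝ) < 729)]
      nlinarith
    · intro p hp
      simp only [Finset.mem_image, Finset.mem_product, Finset.mem_Icc] at hp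
      obtain ⟨q, ⟨⟨hq1, hq2⟩, hq3, hq4⟩, rfl⟩ := hp
      dsimp only
      refine ⟨hq1, hq2, hq1, hq2, hq3, hq4, by omega, by omega⟩
  · push_neg at hbig
    set t := N / 8 with ht
    have key := Tsum_ge_card hNM (Finset.Icc 1 t ×ˢ Finset.Icc t (2 * t) ×ˢ Finset.Icc 1 t) ?_
    · have hcard : (Finset.Icc 1 t ×ˢ Finset.Icc t (2 * t) ×ˢ Finset.Icc 1 t).card
          = t * ((t + 1) * t) := by
        rw [Finset.card_product, Finset.card_product]
        simp only [Nat.card_Icc]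
        have e1 : t + 1 - 1 = t := by omega
        have e2 : 2 * t + 1 - t = t + 1 := by omega
        rw [e1, e2]
      rw [hcard] at key
      refine le_trans ?_ key
      have h9 : (N : ℝ) ≤ 9 * t := by
        have : N ≤ 9 * t := by omega
        exact_mod_cast this
      have ht0 : (0 : ℝ) ≤ t := by positivity
      push_cast
      rw [div_le_iff₀ (by norm_num : (0:ℝ) < 729)]
      have h3 : (N : ℝ) ^ 3 ≤ (9 * t) ^ 3 := pow_le_pow_left₀ (by positivity) h9 3
      nlinarith [h3, ht0, sq_nonneg ((t : ℝ))]
    · intro p hp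
      simp only [Finset.mem_product, Finset.mem_Icc] at hp
      obtain ⟨⟨hp1, hp2⟩, ⟨hp3, hp4⟩, hp5, hp6⟩ := hp
      refine ⟨hp1, by omega, by omega, by omega, hp5, by omega, by omega, by omega⟩

lemma Sfun_extend {N : ℕ} (hNM : N < M) (f : ℕ → ℂ) (k : ZMod M) :
    Sfun M (extendZ N M f) k = ∑ n ∈ Finset.Icc 1 N, f n * χ M ((n : ZMod M) * k) := by
  rw [Sfun]
  have h : ∀ a : ZMod M, extendZ N M f a * χ M (a * k)
      = if 1 ≤ a.val ∧ a.val ≤ N then f a.val * χ M (a * k) else 0 := by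
    intro a; unfold extendZ; split_ifs <;> simp
  rw [Finset.sum_congr rfl fun a _ => h a, ← Finset.sum_filter]
  refine Finset.sum_nbij' (i := fun a => a.val) (j := fun n => (n : ZMod M)) ?_ ?_ ?_ ?_ ?_
  · intro a ha
    simp only [Finset.mem_filter] at ha
    simp [Finset.mem_Icc, ha.2.1, ha.2.2]
  · intro n hn
    simp only [Finset.mem_Icc] at hn
    simp only [Finset.mem_filter, Finset.mem_univ, true_and]
    rw [ZMod.val_natCast_of_lt (lt_of_le_of_lt hn.2 hNM)]
    exact hn
  · intro a _; exact ZMod.natCast_zmod_val a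
  · intro n hn
    simp only [Finset.mem_Icc] at hn
    exact ZMod.val_natCast_of_lt (lt_of_le_of_lt hn.2 hNM)
  · intro a _
    rw [ZMod.natCast_zmod_val a]

lemma sum_normSq_extend_le {N : ℕ} (f : ℕ → ℂ)
    (hf : ∀ n, 1 ≤ n → n ≤ N → normSq (f n) ≤ 1) :
    ∑ a : ZMod M, normSq (extendZ N M f a) ≤ (N : ℝ) := by
  have h1 : ∀ a : ZMod M, normSq (extendZ N M f a) ≤ ind N M a := by
    intro a; unfold extendZ ind
    split_ifs with h
    · exact hf _ h.1 h.2
    · simp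
  calc ∑ a : ZMod M, normSq (extendZ N M f a) ≤ ∑ a : ZMod M, ind N M a :=
        Finset.sum_le_sum fun a _ => h1 a
    _ = ((Finset.univ.filter fun a : ZMod M => 1 ≤ a.val ∧ a.val ≤ N).card : ℝ) := by
        unfold ind
        rw [Finset.sum_boole]
    _ ≤ (N : ℝ) := by
        have h3 : (Finset.univ.filter fun a : ZMod M => 1 ≤ a.val ∧ a.val ≤ N).card
            ≤ (Finset.Icc 1 N).card := by
          refine Finset.card_le_card_of_injOn (fun a => a.val) ?_ ?_
          · intro a ha
            simp only [Finset.coe_filter, Set.mem_setOf_eq] at ha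
            simp [Finset.mem_Icc, ha.2.1, ha.2.2]
          · exact fun a _ b _ h => ZMod.val_injective M h
        have h2 : (Finset.Icc 1 N).card = N := by rw [Nat.card_Icc]; omega
        rw [h2] at h3
        exact_mod_cast h3

lemma chi_exp (n : ℕ) (k : ZMod M) :
    χ M ((n : ZMod M) * k) = Complex.exp (2 * Real.pi * Complex.I * (n * k.val) / M) := by
  have h1 : ((n : ZMod M)) * k = (((n * k.val : ℕ) : ℤ) : ZMod M) := by
    push_cast
    rw [ZMod.natCast_zmod_val]
  rw [h1, χ, ZMod.stdAddChar_coe]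
  push_cast
  ring_nf

end U2Aux

/-- Inverse theorem for the `U²` norm: if `f : [N] → [-1,1]` has `‖f‖_{U²([N])} ≥ δ`
then `f` correlates with a linear phase `e(-θn)`, with correlation `≥ c δ²`. -/
theorem u2_inverse_theorem :
    ∃ c : ℝ, 0 < c ∧ ∀ (δ : ℝ) (N : ℕ) (f : ℕ → ℝ), 0 < δ → 0 < N →
      (∀ n ∈ Finset.Icc 1 N, f n ∈ Set.Icc (-1 : ℝ) 1) →
      δ ≤ U2N N (fun n => (f n : ℂ)) →
      ∃ θ : ℝ, c * δ ^ 2 ≤ ‖((1 / (N : ℂ)) *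
        ∑ n ∈ Finset.Icc 1 N, (f n : ℂ) * Complex.exp (-(2 * Real.pi * Complex.I) * θ * n))‖ := by
  classical
  refine ⟨1/27, by norm_num, ?_⟩
  intro δ N f hδ hN hf hU
  rw [U2N] at hU
  set M := 2 * N + 1 + 1 with hM
  haveI : NeZero M := ⟨by omega⟩
  set g : ZMod M → ℂ := extendZ N M (fun n => (f n : ℂ)) with hg
  set one : ZMod M → ℂ := extendZ N M (fun _ => 1) with hone
  have hNM : N < M := by omega
  have hMr : (0:ℝ) < M := by positivity
  have hNr : (0:ℝ) < N := by exact_mod_cast hN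
  -- lower bound for the norm of the indicator
  have hT : (N : ℝ) ^ 3 / 729 ≤ U2Aux.Tsum N M := U2Aux.Tsum_lower hN (by omega)
  have hone_re : (U2p4 M one).re = U2Aux.Tsum N M / (M:ℝ)^3 := U2Aux.U2p4_one_re N
  have hone_pos : 0 < (U2p4 M one).re := by
    rw [hone_re]
    have : (0:ℝ) < (N : ℝ) ^ 3 / 729 := by positivity
    exact div_pos (lt_of_lt_of_le this hT) (by positivity)
  have honenorm_pos : 0 < u2norm M one := Real.rpow_pos_of_pos hone_pos _
  -- from δ ≤ U2N, get δ⁴ ⬝ ‖1‖⁴ ≤ ‖f‖⁴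
  have hU2 : δ * u2norm M one ≤ u2norm M g := (le_div_iff₀ honenorm_pos).mp hU
  have e1 : (u2norm M one) ^ 4 = (U2p4 M one).re := by
    rw [u2norm, ← Real.rpow_natCast _ 4, ← Real.rpow_mul (le_of_lt hone_pos)]
    norm_num
  have e2 : (u2norm M g) ^ 4 = (U2p4 M g).re := by
    rw [u2norm, ← Real.rpow_natCast _ 4, ← Real.rpow_mul (U2Aux.U2p4_re_nonneg g)]
    norm_num
  have h4 : δ ^ 4 * (U2p4 M one).re ≤ (U2p4 M g).re := by
    calc δ ^ 4 * (U2p4 M one).re = (δ * u2norm M one) ^ 4 := by rw [mul_pow, e1]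
      _ ≤ (u2norm M g) ^ 4 := by
          refine pow_le_pow_left₀ ?_ hU2 4
          positivity
      _ = (U2p4 M g).re := e2
  -- pick the maximal Fourier coefficient
  obtain ⟨k₀, -, hk₀⟩ := Finset.exists_max_image Finset.univ
    (fun k : ZMod M => Complex.normSq (U2Aux.Sfun M g k)) ⟨0, Finset.mem_univ 0⟩
  -- Parseval and the L² bound
  have hpars : ∑ k : ZMod M, Complex.normSq (U2Aux.Sfun M g k)
      = (M : ℝ) * ∑ a : ZMod M, Complex.normSq (g a) := by
    have := U2Aux.parseval g
    exact_mod_cast this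
  have hsq : ∑ a : ZMod M, Complex.normSq (g a) ≤ (N : ℝ) := by
    refine U2Aux.sum_normSq_extend_le _ fun n h1 h2 => ?_
    have hb := hf n (Finset.mem_Icc.mpr ⟨h1, h2⟩)
    obtain ⟨hb1, hb2⟩ := hb
    rw [Complex.normSq_ofReal]
    nlinarith
  have hupper : (U2p4 M g).re ≤ Complex.normSq (U2Aux.Sfun M g k₀) * N / (M:ℝ)^3 := by
    rw [U2Aux.U2p4_re]
    have hP1 : ∑ k : ZMod M, (Complex.normSq (U2Aux.Sfun M g k)) ^ 2
        ≤ Complex.normSq (U2Aux.Sfun M g k₀) * ((M : ℝ) * N) := by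
      calc ∑ k : ZMod M, (Complex.normSq (U2Aux.Sfun M g k)) ^ 2
          ≤ ∑ k : ZMod M, Complex.normSq (U2Aux.Sfun M g k₀) * Complex.normSq (U2Aux.Sfun M g k) := by
            refine Finset.sum_le_sum fun k _ => ?_
            have h0 := Complex.normSq_nonneg (U2Aux.Sfun M g k)
            have h1 := hk₀ k (Finset.mem_univ k)
            nlinarith
        _ = Complex.normSq (U2Aux.Sfun M g k₀) * ∑ k : ZMod M, Complex.normSq (U2Aux.Sfun M g k) := by
            rw [Finset.mul_sum]
        _ ≤ Complex.normSq (U2Aux.Sfun M g k₀) * ((M : ℝ) * N) := by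
            rw [hpars]
            refine mul_le_mul_of_nonneg_left ?_ (Complex.normSq_nonneg _)
            exact mul_le_mul_of_nonneg_left hsq (le_of_lt hMr)
    calc (∑ k : ZMod M, (Complex.normSq (U2Aux.Sfun M g k)) ^ 2) / (M:ℝ)^4
        ≤ (Complex.normSq (U2Aux.Sfun M g k₀) * ((M : ℝ) * N)) / (M:ℝ)^4 := by
          exact div_le_div_of_nonneg_right hP1 (by positivity) |>.trans_eq rfl
      _ = Complex.normSq (U2Aux.Sfun M g k₀) * N / (M:ℝ)^3 := by
          field_simp
  -- conclude the pointwise Fourier bound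
  have hnsq : δ ^ 4 * (N:ℝ)^2 / 729 ≤ Complex.normSq (U2Aux.Sfun M g k₀) := by
    have hchain : δ ^ 4 * ((N : ℝ) ^ 3 / 729) / (M:ℝ)^3
        ≤ Complex.normSq (U2Aux.Sfun M g k₀) * N / (M:ℝ)^3 := by
      refine le_trans ?_ (h4.trans hupper)
      rw [hone_re]
      rw [div_le_iff₀ (by positivity : (0:ℝ) < (M:ℝ)^3)]
      have : δ ^ 4 * (U2Aux.Tsum N M / (M:ℝ)^3) * (M:ℝ)^3 = δ ^ 4 * U2Aux.Tsum N M := by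
        field_simp
      rw [this]
      have h729 : δ ^ 4 * ((N : ℝ) ^ 3 / 729) ≤ δ ^ 4 * U2Aux.Tsum N M := by
        refine mul_le_mul_of_nonneg_left hT (by positivity)
      linarith
    have hMul := mul_le_mul_of_nonneg_right hchain (le_of_lt (by positivity : (0:ℝ) < (M:ℝ)^3))
    have eL : δ ^ 4 * ((N : ℝ) ^ 3 / 729) / (M:ℝ)^3 * (M:ℝ)^3 = δ ^ 4 * (N : ℝ) ^ 3 / 729 := by
      field_simp
    have eR : Complex.normSq (U2Aux.Sfun M g k₀) * N / (M:ℝ)^3 * (M:ℝ)^3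
        = Complex.normSq (U2Aux.Sfun M g k₀) * N := by
      field_simp
    rw [eL, eR] at hMul
    have : δ ^ 4 * (N:ℝ)^2 / 729 * N ≤ Complex.normSq (U2Aux.Sfun M g k₀) * N := by
      calc δ ^ 4 * (N:ℝ)^2 / 729 * N = δ ^ 4 * (N : ℝ) ^ 3 / 729 := by ring
        _ ≤ _ := hMul
    exact le_of_mul_le_mul_right this hNr
  have hA : δ ^ 2 * (N:ℝ) / 27 ≤ ‖U2Aux.Sfun M g k₀‖ := by
    have h1 : (δ ^ 2 * (N:ℝ) / 27) ^ 2 ≤ (‖U2Aux.Sfun M g k₀‖) ^ 2 := by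
      rw [Complex.sq_norm]
      calc (δ ^ 2 * (N:ℝ) / 27) ^ 2 = δ ^ 4 * (N:ℝ)^2 / 729 := by ring
        _ ≤ _ := hnsq
    have h2 := Real.sqrt_le_sqrt h1
    rwa [Real.sqrt_sq (by positivity), Real.sqrt_sq (norm_nonneg _)] at h2
  -- the linear phase
  refine ⟨-(((k₀.val : ℝ)) / M), ?_⟩
  have hsum : ∑ n ∈ Finset.Icc 1 N, (f n : ℂ) *
      Complex.exp (-(2 * Real.pi * Complex.I) * (-(((k₀.val : ℝ)) / M) : ℝ) * n)
      = U2Aux.Sfun M g k₀ := by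
    rw [hg, U2Aux.Sfun_extend hNM]
    refine Finset.sum_congr rfl fun n hn => ?_
    rw [U2Aux.chi_exp]
    congr 1
    push_cast
    field_simp
  rw [norm_mul, hsum]
  have habs : ‖(1 / (N : ℂ))‖ = 1 / (N : ℝ) := by
    rw [norm_div, norm_one, Complex.norm_natCast]
  rw [habs]
  calc (1:ℝ)/27 * δ ^ 2 = (δ ^ 2 * (N:ℝ) / 27) * (1 / (N:ℝ)) := by
        field_simp
    _ ≤ ‖U2Aux.Sfun M g k₀‖ * (1 / (N:ℝ)) := by
        refine mul_le_mul_of_nonneg_right hA (by positivity)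
    _ = 1 / (N:ℝ) * ‖U2Aux.Sfun M g k₀‖ := by ring
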